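/- For the 7-dimensional replicator system on the tournament formed by embedding two disjoint 3-cycles (vertices {1,2,3} and {4,5,6}) and a singleton 7 into a 3-cycle (with block edges {1,2,3}→{4,5,6}, {4,5,6}→7, 7→{1,2,3}), the quantity f₃ = (x₁+x₂+x₃)(x₄+x₅+x₆)x₇ is conserved along solutions. -/

import Mathlib

/-- For the 7-dimensional replicator system on the tournament obtained by embedding
two 3-cycles `{1,2,3}`, `{4,5,6}` and a singleton `7` into a 3-cycle
(edges 1→2→3→1, 4→5→6→4, {1,2,3}→{4,5,6}, {4,5,6}→7, 7→{1,2,3}),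
the quantity `f₃ = (x₁+x₂+x₃)(x₄+x₅+x₆)x₇` is conserved. -/
theorem embedded7_f3_conserved (x₁ x₂ x₃ x₄ x₅ x₆ x₇ : ℝ → ℝ)
    (h₁ : ∀ t, HasDerivAt x₁ (x₁ t * (x₃ t + x₇ t - x₂ t - x₄ t - x₅ t - x₆ t)) t)
    (h₂ : ∀ t, HasDerivAt x₂ (x₂ t * (x₁ t + x₇ t - x₃ t - x₄ t - x₅ t - x₆ t)) t)
    (h₃ : ∀ t, HasDerivAt x₃ (x₃ t * (x₂ t + x₇ t - x₁ t - x₄ t - x₅ t - x₆ t)) t)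
    (h₄ : ∀ t, HasDerivAt x₄ (x₄ t * (x₆ t + x₁ t + x₂ t + x₃ t - x₅ t - x₇ t)) t)
    (h₅ : ∀ t, HasDerivAt x₅ (x₅ t * (x₄ t + x₁ t + x₂ t + x₃ t - x₆ t - x₇ t)) t)
    (h₆ : ∀ t, HasDerivAt x₆ (x₆ t * (x₅ t + x₁ t + x₂ t + x₃ t - x₄ t - x₇ t)) t)
    (h₇ : ∀ t, HasDerivAt x₇ (x₇ t * (x₄ t + x₅ t + x₆ t - x₁ t - x₂ t - x₃ t)) t) :
    ∀ t, HasDerivAt (fun s => (x₁ s + x₂ s + x₃ s) * (x₄ s + x₅ s + x₆ s) * x₇ s) 0 t := by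
  intro t
  have h := ((((h₁ t).add (h₂ t)).add (h₃ t)).mul (((h₄ t).add (h₅ t)).add (h₆ t))).mul (h₇ t)
  refine h.congr_deriv ?_
  simp only [Pi.add_apply, Pi.mul_apply]
  ring
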